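/- Let H be a complex Hilbert space and A a bounded self-adjoint linear operator on H. Let φ, ψ : ℝ → ℂ be continuous even functions such that |φ| and |ψ| are strictly increasing on (0,∞) and |φ(t)|/|ψ(t)| is non-increasing on (0,∞). Fix b > 0 and let φ_b and N(b) be as defined. Then the operator norm of φ_b(A) is at most N(b), and for every x ∈ H one has ‖φ(A)x − φ_b(A)x‖ ≤ (|φ(b)|/|ψ(b)|)·‖ψ(A)x‖. In particular, sup{‖φ(A)x − φ_b(A)x‖ : x ∈ H, ‖ψ(A)x‖ ≤ 1} ≤ |φ(b)|/|ψ(b)|, so the best approximation of φ(A) on W^ψ = {x : ‖ψ(A)x‖ ≤ 1} by bounded operators of norm at most N(b) satisfies E(N(b)) ≤ |φ(b)|/|ψ(b)|. -/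

import Mathlib

open scoped ENNReal NNReal

/-- The truncation `φ_b(t) = φ(t) − (φ(b)/ψ(b))·ψ(t)` for `|t| ≤ b`, `0` otherwise. -/
noncomputable def phib (φ ψ : ℝ → ℂ) (b : ℝ) : ℝ → ℂ :=
  fun t => if |t| ≤ b then φ t - (φ b / ψ b) * ψ t else 0

/-- `N(b) = sup_{t ∈ ℝ} |φ_b(t)|`. -/
noncomputable def Nb (φ ψ : ℝ → ℂ) (b : ℝ) : ℝ :=
  ⨆ t : ℝ, ‖phib φ ψ b t‖

private lemma inner_re_le_of_le {H : Type*} [NormedAddCommGroup H] [InnerProductSpace ℂ H]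
    [CompleteSpace H] {T S : H →L[ℂ] H} (h : T ≤ S) (x : H) :
    (inner ℂ x (T x) : ℂ).re ≤ (inner ℂ x (S x) : ℂ).re := by
  have h1 : (S - T).IsPositive := (ContinuousLinearMap.le_def T S).mp h
  have h2 := h1.inner_nonneg_right x
  simp only [ContinuousLinearMap.sub_apply, inner_sub_right, map_sub,
    RCLike.re_to_complex] at h2
  have h3 := (Complex.le_def.mp h2).1
  rw [Complex.zero_re, Complex.sub_re] at h3
  linarith

/-- **Upper bound in the Stechkin problem for `φ(A)` on `W^ψ`.** Here `g(A)` is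
encoded via the continuous functional calculus of the self-adjoint operator `A`
applied to `z ↦ g(Re z)`. The operator `φ_b(A)` has norm at most `N(b)`, and
`‖φ(A)x − φ_b(A)x‖ ≤ (|φ(b)|/|ψ(b)|)·‖ψ(A)x‖` for all `x`; in particular the
deviation of `φ_b(A)` from `φ(A)` on `W^ψ` is at most `|φ(b)|/|ψ(b)|`, so
`E(N(b)) ≤ |φ(b)|/|ψ(b)|` (the infimum over bounded operators of norm `≤ N(b)`
of the deviation, taken in `ℝ≥0∞`). -/
theorem best_approx_by_bounded_upper_bound
    {H : Type*} [NormedAddCommGroup H] [InnerProductSpace ℂ H] [CompleteSpace H]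
    (A : H →L[ℂ] H) (hA : IsSelfAdjoint A)
    (φ ψ : ℝ → ℂ) (hφc : Continuous φ) (hψc : Continuous ψ)
    (hφe : ∀ t : ℝ, φ (-t) = φ t) (hψe : ∀ t : ℝ, ψ (-t) = ψ t)
    (hφm : StrictMonoOn (fun t => ‖φ t‖) (Set.Ioi (0 : ℝ)))
    (hψm : StrictMonoOn (fun t => ‖ψ t‖) (Set.Ioi (0 : ℝ)))
    (hratio : AntitoneOn (fun t => ‖φ t‖ / ‖ψ t‖) (Set.Ioi (0 : ℝ)))
    (b : ℝ) (hb : 0 < b) :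
    ‖cfc (fun z : ℂ => phib φ ψ b z.re) A‖ ≤ Nb φ ψ b ∧
    (∀ x : H,
      ‖cfc (fun z : ℂ => φ z.re) A x - cfc (fun z : ℂ => phib φ ψ b z.re) A x‖
        ≤ (‖φ b‖ / ‖ψ b‖) * ‖cfc (fun z : ℂ => ψ z.re) A x‖) ∧
    (⨆ x : {x : H // ‖cfc (fun z : ℂ => ψ z.re) A x‖ ≤ 1},
        (‖cfc (fun z : ℂ => φ z.re) A (x : H)
            - cfc (fun z : ℂ => phib φ ψ b z.re) A (x : H)‖₊ : ℝ≥0∞))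
      ≤ ENNReal.ofReal (‖φ b‖ / ‖ψ b‖) ∧
    (⨅ T : {T : H →L[ℂ] H // ‖T‖ ≤ Nb φ ψ b},
        ⨆ x : {x : H // ‖cfc (fun z : ℂ => ψ z.re) A x‖ ≤ 1},
          (‖cfc (fun z : ℂ => φ z.re) A (x : H) - (T : H →L[ℂ] H) (x : H)‖₊ : ℝ≥0∞))
      ≤ ENNReal.ofReal (‖φ b‖ / ‖ψ b‖) := by
  have hA' : IsStarNormal A := hA.isStarNormal
  have hψb0 : 0 < ‖ψ b‖ := by
    have h1 : ‖ψ (b / 2)‖ < ‖ψ b‖ :=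
      hψm (Set.mem_Ioi.mpr (by linarith)) (Set.mem_Ioi.mpr hb) (by linarith)
    exact lt_of_le_of_lt (norm_nonneg _) h1
  have hψb : ψ b ≠ 0 := by
    intro h; rw [h, norm_zero] at hψb0; exact lt_irrefl _ hψb0
  set c : ℝ := ‖φ b‖ / ‖ψ b‖ with hcdef
  have hc0 : 0 ≤ c := div_nonneg (norm_nonneg _) hψb0.le
  -- continuity of `phib`
  have hzero : ∀ t : ℝ, |t| = b → φ t - (φ b / ψ b) * ψ t = 0 := by
    intro t ht
    rcases (abs_eq hb.le).mp ht with rfl | rfl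
    · field_simp; ring
    · rw [hφe, hψe]; field_simp; ring
  have hphibc : Continuous (phib φ ψ b) := by
    unfold phib
    exact Continuous.if_le (hφc.sub (continuous_const.mul hψc)) continuous_const
      continuous_abs continuous_const (fun t ht => hzero t ht)
  -- boundedness of `‖phib‖` and basic facts about `Nb`
  obtain ⟨t₀, ht₀, hmax⟩ := (isCompact_Icc (a := -b) (b := b)).exists_isMaxOn
      ⟨0, by constructor <;> linarith⟩ (hphibc.norm.continuousOn)
  have hbdd : ∀ t, ‖phib φ ψ b t‖ ≤ ‖phib φ ψ b t₀‖ := by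
    intro t
    by_cases h : |t| ≤ b
    · exact hmax (abs_le.mp h)
    · simp only [phib, if_neg h, norm_zero]
      exact norm_nonneg _
  have hBdd : BddAbove (Set.range fun t => ‖phib φ ψ b t‖) :=
    ⟨‖phib φ ψ b t₀‖, Set.forall_mem_range.mpr hbdd⟩
  have hNb : ∀ t, ‖phib φ ψ b t‖ ≤ Nb φ ψ b := fun t => le_ciSup hBdd t
  have hNb0 : 0 ≤ Nb φ ψ b := le_trans (norm_nonneg _) (hNb 0)
  -- Part 1
  have part1 : ‖cfc (fun z : ℂ => phib φ ψ b z.re) A‖ ≤ Nb φ ψ b :=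
    norm_cfc_le hNb0 fun z _ => hNb z.re
  -- pointwise inequality
  have hpt : ∀ t : ℝ, ‖φ t - phib φ ψ b t‖ ≤ c * ‖ψ t‖ := by
    intro t
    by_cases h : |t| ≤ b
    · simp only [phib, if_pos h, sub_sub_cancel]
      rw [norm_mul, norm_div]
    · simp only [phib, if_neg h, sub_zero]
      push_neg at h
      have habs0 : (0 : ℝ) < |t| := hb.trans h
      have hφt : ‖φ t‖ = ‖φ |t|‖ := by
        rcases abs_choice t with h' | h'
        · rw [h']
        · rw [h', hφe]
      have hψt : ‖ψ t‖ = ‖ψ |t|‖ := by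
        rcases abs_choice t with h' | h'
        · rw [h']
        · rw [h', hψe]
      have hψpos : 0 < ‖ψ |t|‖ :=
        hψb0.trans (hψm (Set.mem_Ioi.mpr hb) (Set.mem_Ioi.mpr habs0) h)
      have hr := hratio (Set.mem_Ioi.mpr hb) (Set.mem_Ioi.mpr habs0) h.le
      rw [hφt, hψt]
      calc ‖φ |t|‖ = (‖φ |t|‖ / ‖ψ |t|‖) * ‖ψ |t|‖ := (div_mul_cancel₀ _ hψpos.ne').symm
        _ ≤ c * ‖ψ |t|‖ := mul_le_mul_of_nonneg_right hr (norm_nonneg _)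
  -- key operator inequality
  have key : ∀ (w : ℝ → ℂ), Continuous w → (∀ t, ‖w t‖ ≤ c * ‖ψ t‖) →
      ∀ x : H, ‖cfc (fun z : ℂ => w z.re) A x‖ ≤ c * ‖cfc (fun z : ℂ => ψ z.re) A x‖ := by
    intro w hwc hwle x
    have hwC : Continuous fun z : ℂ => w z.re := hwc.comp Complex.continuous_re
    have hψC : Continuous fun z : ℂ => ψ z.re := hψc.comp Complex.continuous_re
    set U := cfc (fun z : ℂ => w z.re) A with hU
    set V := cfc (fun z : ℂ => ψ z.re) A with hV
    have hsq : ∀ (g : ℝ → ℂ), Continuous g →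
        star (cfc (fun z : ℂ => g z.re) A) * cfc (fun z : ℂ => g z.re) A
          = cfc (fun t : ℝ => ‖g t‖ ^ 2) A := by
      intro g hgc
      have hgC : Continuous fun z : ℂ => g z.re := hgc.comp Complex.continuous_re
      rw [← cfc_star (fun z : ℂ => g z.re) A,
        ← cfc_mul _ _ A (hgC.star.continuousOn) (hgC.continuousOn)]
      rw [cfc_real_eq_complex (fun t => ‖g t‖ ^ 2) hA]
      apply cfc_congr
      intro z _
      show star (g z.re) * g z.re = ((‖g z.re‖ ^ 2 : ℝ) : ℂ)
      rw [mul_comm, RCLike.star_def, Complex.mul_conj, Complex.normSq_eq_norm_sq,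
        Complex.ofReal_pow]
    have hUU : star U * U = cfc (fun t : ℝ => ‖w t‖ ^ 2) A := hsq w hwc
    have hVV : star V * V = cfc (fun t : ℝ => ‖ψ t‖ ^ 2) A := hsq ψ hψc
    have hle : star U * U ≤ (c ^ 2) • (star V * V) := by
      rw [hUU, hVV, ← cfc_const_mul (c ^ 2) (fun t : ℝ => ‖ψ t‖ ^ 2) A
        ((hψc.norm.pow 2).continuousOn)]
      refine cfc_mono (fun t _ => ?_) ((hwc.norm.pow 2).continuousOn)
        ((continuous_const.mul (hψc.norm.pow 2)).continuousOn)
      calc ‖w t‖ ^ 2 ≤ (c * ‖ψ t‖) ^ 2 := pow_le_pow_left₀ (norm_nonneg _) (hwle t) 2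
        _ = c ^ 2 * ‖ψ t‖ ^ 2 := by ring
    have hinner := inner_re_le_of_le hle x
    have hU2 : (inner ℂ x ((star U * U) x) : ℂ).re = ‖U x‖ ^ 2 := by
      rw [ContinuousLinearMap.mul_apply, ContinuousLinearMap.star_eq_adjoint,
        ContinuousLinearMap.adjoint_inner_right]
      exact inner_self_eq_norm_sq (𝕜 := ℂ) (U x)
    have hV2 : (inner ℂ x (((c ^ 2) • (star V * V)) x) : ℂ).re = c ^ 2 * ‖V x‖ ^ 2 := by
      have h2 : (inner ℂ x ((star V * V) x) : ℂ).re = ‖V x‖ ^ 2 := by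
        rw [ContinuousLinearMap.mul_apply, ContinuousLinearMap.star_eq_adjoint,
          ContinuousLinearMap.adjoint_inner_right]
        exact inner_self_eq_norm_sq (𝕜 := ℂ) (V x)
      have hsm : ∀ y : H, (c ^ 2 : ℝ) • y = ((c ^ 2 : ℝ) : ℂ) • y := fun y => by
        calc (c ^ 2 : ℝ) • y = (c ^ 2 : ℝ) • ((1 : ℂ) • y) := by rw [one_smul]
          _ = ((c ^ 2 : ℝ) • (1 : ℂ)) • y := (smul_assoc _ _ _).symm
          _ = ((c ^ 2 : ℝ) : ℂ) • y := by norm_num [Complex.real_smul]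
      rw [ContinuousLinearMap.smul_apply, hsm, inner_smul_right, Complex.mul_re,
        Complex.ofReal_re, Complex.ofReal_im, h2]
      ring
    rw [hU2, hV2] at hinner
    have : ‖U x‖ ^ 2 ≤ (c * ‖V x‖) ^ 2 := by nlinarith
    exact le_of_pow_le_pow_left₀ two_ne_zero (mul_nonneg hc0 (norm_nonneg _)) this
  -- Part 2
  have hphibC : Continuous fun z : ℂ => phib φ ψ b z.re := hphibc.comp Complex.continuous_re
  have hφC : Continuous fun z : ℂ => φ z.re := hφc.comp Complex.continuous_re
  have part2 : ∀ x : H,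
      ‖cfc (fun z : ℂ => φ z.re) A x - cfc (fun z : ℂ => phib φ ψ b z.re) A x‖
        ≤ c * ‖cfc (fun z : ℂ => ψ z.re) A x‖ := by
    intro x
    have hsub : cfc (fun z : ℂ => φ z.re - phib φ ψ b z.re) A
        = cfc (fun z : ℂ => φ z.re) A - cfc (fun z : ℂ => phib φ ψ b z.re) A :=
      cfc_sub _ _ A hφC.continuousOn hphibC.continuousOn
    have := key (fun t => φ t - phib φ ψ b t) (hφc.sub hphibc) hpt x
    rw [hsub] at this
    simpa using this
  -- Part 3
  have part3 : (⨆ x : {x : H // ‖cfc (fun z : ℂ => ψ z.re) A x‖ ≤ 1},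
        (‖cfc (fun z : ℂ => φ z.re) A (x : H)
            - cfc (fun z : ℂ => phib φ ψ b z.re) A (x : H)‖₊ : ℝ≥0∞))
      ≤ ENNReal.ofReal c := by
    refine iSup_le fun x => ?_
    rw [← ENNReal.ofReal_coe_nnreal, coe_nnnorm]
    refine ENNReal.ofReal_le_ofReal ?_
    calc ‖cfc (fun z : ℂ => φ z.re) A (x : H)
          - cfc (fun z : ℂ => phib φ ψ b z.re) A (x : H)‖
        ≤ c * ‖cfc (fun z : ℂ => ψ z.re) A (x : H)‖ := part2 x
      _ ≤ c * 1 := mul_le_mul_of_nonneg_left x.2 hc0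
      _ = c := mul_one c
  refine ⟨part1, part2, part3, ?_⟩
  exact iInf_le_of_le ⟨cfc (fun z : ℂ => phib φ ψ b z.re) A, part1⟩ part3
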